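/- Write points of ℝ⁴ as x = (u₊, x₁, x₂, u₋), and let ∂₁, ∂₂ denote the partial derivatives in the x₁ and x₂ coordinates. Let α, β, A > 0, and let h : ℝ⁴ → (real symmetric 2×2 matrices) be continuously differentiable with αI ≤ h(x) ≤ βI (in the sense of quadratic forms) for all x, and with |∂₁h_{cd}(x)| ≤ A and |∂₂h_{cd}(x)| ≤ A for all x and all c, d ∈ {1,2}. Let w : ℝ⁴ → [0,∞) be continuously differentiable with ∂₁w = 0 and ∂₂w = 0 identically. Then there exists C > 0, depending only on α, β, A, such that for every three times continuously differentiable, compactly supported u : ℝ⁴ → ℝ: ∫_{ℝ⁴} Σ_{c,d,e,r=1}^{2} h_{cd}(x) h_{er}(x) ∂_c∂_e u · ∂_d∂_r u · w dx ≤ C · [ ∫_{ℝ⁴} (Σ_{c,d=1}^{2} h_{cd}(x) ∂_c∂_d u)² · w dx + ∫_{ℝ⁴} ((∂₁u)² + (∂₂u)²) · w dx ]. -/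

import Mathlib

open MeasureTheory

/-- Partial derivative of a function on ℝ⁴ in the `i`-th coordinate direction;
coordinates `x = (u₊, x₁, x₂, u₋)` are indexed by `0,1,2,3`. -/
noncomputable def pd (i : Fin 4) (φ : (Fin 4 → ℝ) → ℝ) (x : Fin 4 → ℝ) : ℝ :=
  fderiv ℝ φ x (Pi.single i 1)

/-- The coordinate direction of ℝ⁴ (namely `x₁` or `x₂`) corresponding to a
tangential matrix index `i ∈ {1,2}`. -/
def dir (i : Fin 2) : Fin 4 := i.succ.castSucc

namespace WEEaux
open Matrix

lemma contDiff_pd {f : (Fin 4 → ℝ) → ℝ} {m : ℕ} (hf : ContDiff ℝ (m + 1 : ℕ) f) (i : Fin 4) :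
    ContDiff ℝ (m : ℕ) (pd i f) := by
  have h1 : ContDiff ℝ (m : ℕ) (fderiv ℝ f) := hf.fderiv_right (by norm_cast)
  exact h1.clm_apply contDiff_const

lemma continuous_pd {f : (Fin 4 → ℝ) → ℝ} (hf : ContDiff ℝ 1 f) (i : Fin 4) :
    Continuous (pd i f) := by
  have h1 : ContDiff ℝ (0 : ℕ) (fderiv ℝ f) := hf.fderiv_right (by norm_num)
  exact (h1.clm_apply contDiff_const).continuous

lemma hasCompactSupport_pd {f : (Fin 4 → ℝ) → ℝ} (hf : HasCompactSupport f) (i : Fin 4) :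
    HasCompactSupport (pd i f) :=
  hf.fderiv_apply ℝ (Pi.single i 1)

lemma pd_mul (i : Fin 4) {f g : (Fin 4 → ℝ) → ℝ} {x : Fin 4 → ℝ}
    (hf : DifferentiableAt ℝ f x) (hg : DifferentiableAt ℝ g x) :
    pd i (fun y => f y * g y) x = pd i f x * g x + f x * pd i g x := by
  unfold pd
  rw [fderiv_fun_mul hf hg]
  simp only [ContinuousLinearMap.add_apply, ContinuousLinearMap.smul_apply, smul_eq_mul]
  ring

lemma pd_eq_snd {f : (Fin 4 → ℝ) → ℝ} (hf : ContDiff ℝ 2 f) (i j : Fin 4) (x : Fin 4 → ℝ) :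
    pd i (pd j f) x = fderiv ℝ (fderiv ℝ f) x (Pi.single i 1) (Pi.single j 1) := by
  have hdiff : DifferentiableAt ℝ (fderiv ℝ f) x := by
    have : ContDiff ℝ 1 (fderiv ℝ f) := hf.fderiv_right (by norm_num)
    exact (this.differentiable (by norm_num)).differentiableAt
  show fderiv ℝ (fun y => (fderiv ℝ f y) (Pi.single j 1)) x (Pi.single i 1) = _
  rw [fderiv_clm_apply hdiff (differentiableAt_const _)]
  simp

lemma pd_comm {f : (Fin 4 → ℝ) → ℝ} (hf : ContDiff ℝ 2 f) (i j : Fin 4) (x : Fin 4 → ℝ) :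
    pd i (pd j f) x = pd j (pd i f) x := by
  rw [pd_eq_snd hf, pd_eq_snd hf]
  exact (hf.contDiffAt.isSymmSndFDerivAt (by simp)) _ _

lemma intg_congr {f g : (Fin 4 → ℝ) → ℝ} (h : ∀ x, f x = g x) : ∫ x, f x = ∫ x, g x :=
  congrArg (integral volume) (funext h)

/-- Weighted integration by parts in a direction where the weight is constant. -/
lemma ibp_w {k : Fin 4} {F G w : (Fin 4 → ℝ) → ℝ} (hF : ContDiff ℝ 1 F) (hG : ContDiff ℝ 1 G)
    (hGc : HasCompactSupport G) (hw : ContDiff ℝ 1 w) (hwk : ∀ x, pd k w x = 0) :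
    ∫ x, F x * pd k G x * w x = - ∫ x, pd k F x * G x * w x := by
  have hFw : ContDiff ℝ 1 (fun x => F x * w x) := hF.mul hw
  have h1 : Integrable (fun x => fderiv ℝ (fun y => F y * w y) x (Pi.single k 1) * G x) :=
    ((continuous_pd hFw k).mul hG.continuous).integrable_of_hasCompactSupport hGc.mul_left
  have h2 : Integrable (fun x => (F x * w x) * fderiv ℝ G x (Pi.single k 1)) :=
    ((hF.continuous.mul hw.continuous).mul (continuous_pd hG k)).integrable_of_hasCompactSupport
      (hasCompactSupport_pd hGc k).mul_left
  have h3 : Integrable (fun x => (F x * w x) * G x) :=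
    ((hF.continuous.mul hw.continuous).mul hG.continuous).integrable_of_hasCompactSupport
      hGc.mul_left
  have key := integral_mul_fderiv_eq_neg_fderiv_mul_of_integrable h1 h2 h3
    (fun x _ => (hFw.differentiable (by norm_num)) x) (fun x _ => (hG.differentiable (by norm_num)) x)
  have e1 : (fun x => F x * pd k G x * w x)
      = fun x => (F x * w x) * fderiv ℝ G x (Pi.single k 1) := by
    funext x; show F x * pd k G x * w x = (F x * w x) * pd k G x; ring
  have e2 : (fun x => pd k F x * G x * w x)
      = fun x => fderiv ℝ (fun y => F y * w y) x (Pi.single k 1) * G x := by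
    funext x
    have : fderiv ℝ (fun y => F y * w y) x (Pi.single k 1) = pd k (fun y => F y * w y) x := rfl
    rw [this, pd_mul k ((hF.differentiable (by norm_num)) x) ((hw.differentiable (by norm_num)) x), hwk x]
    ring
  rw [e1, e2, key]


open Matrix in
lemma psd_diag_nonneg {n : ℕ} {M : Matrix (Fin n) (Fin n) ℝ} (hM : M.PosSemidef) (i : Fin n) :
    0 ≤ M i i := by
  have := hM.dotProduct_mulVec_nonneg (Pi.single i 1)
  simpa [dotProduct, Matrix.mulVec, Pi.single_apply, Finset.sum_ite_eq] using this

lemma psd_trace_nonneg {n : ℕ} {M : Matrix (Fin n) (Fin n) ℝ} (hM : M.PosSemidef) :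
    0 ≤ M.trace :=
  Finset.sum_nonneg fun i _ => psd_diag_nonneg hM i

open scoped MatrixOrder in
open Matrix in
lemma trace_mul_nonneg {n : ℕ} {X Y : Matrix (Fin n) (Fin n) ℝ} (hX : X.PosSemidef)
    (hY : Y.PosSemidef) : 0 ≤ (X * Y).trace := by
  obtain ⟨B, rfl⟩ := CStarAlgebra.nonneg_iff_eq_star_mul_self.mp hX.nonneg
  rw [star_eq_conjTranspose]
  have h1 : (B * Y * Bᴴ).PosSemidef := hY.mul_mul_conjTranspose_same B
  have h2 : (Bᴴ * B * Y).trace = (B * Y * Bᴴ).trace := by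
    rw [Matrix.mul_assoc, Matrix.trace_mul_comm, Matrix.mul_assoc]
  rw [h2]
  exact psd_trace_nonneg h1

open Matrix in
lemma coer_mat {αr : ℝ} (hα : 0 ≤ αr) (M D : Matrix (Fin 2) (Fin 2) ℝ)
    (hN : (M - αr • (1 : Matrix (Fin 2) (Fin 2) ℝ)).PosSemidef) (hD : D.IsSymm) :
    αr ^ 2 * (D * D).trace ≤ (M * D * (M * D)).trace := by
  set N := M - αr • (1 : Matrix (Fin 2) (Fin 2) ℝ) with hNdef
  have hM : M = N + αr • 1 := by rw [hNdef]; abel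
  have hDH : Dᴴ = D := by
    rw [conjTranspose_eq_transpose_of_trivial]; exact hD
  have hDD : (D * D).PosSemidef := by
    have := posSemidef_conjTranspose_mul_self D; rwa [hDH] at this
  have hDND : (D * (N * D)).PosSemidef := by
    have := hN.conjTranspose_mul_mul_same D; rw [hDH] at this
    rwa [Matrix.mul_assoc] at this
  have t1 : 0 ≤ (N * (D * (N * D))).trace := trace_mul_nonneg hN hDND
  have t2 : 0 ≤ (N * (D * D)).trace := trace_mul_nonneg hN hDD
  have expand : M * D * (M * D)
      = N * (D * (N * D)) + αr • (N * (D * D)) + αr • (D * (N * D)) + (αr ^ 2) • (D * D) := by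
    rw [hM]
    simp only [add_mul, mul_add, smul_mul_assoc, Matrix.mul_smul, Matrix.one_mul,
      Matrix.mul_one, smul_smul, Matrix.mul_assoc, smul_add]
    rw [sq]
    abel
  have cyc : (D * (N * D)).trace = (N * (D * D)).trace := by
    rw [trace_mul_comm, Matrix.mul_assoc]
  rw [expand, trace_add, trace_add, trace_add, trace_smul, trace_smul, trace_smul, cyc,
    smul_eq_mul, smul_eq_mul]
  nlinarith [mul_nonneg hα t2]

lemma entry_bound {αr βr : ℝ} (hα : 0 < αr) (M : Matrix (Fin 2) (Fin 2) ℝ) (hsym : M.IsSymm)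
    (h1 : (M - αr • (1 : Matrix (Fin 2) (Fin 2) ℝ)).PosSemidef)
    (h2 : ((βr • (1 : Matrix (Fin 2) (Fin 2) ℝ)) - M).PosSemidef) (c d : Fin 2) :
    |M c d| ≤ βr := by
  have hs : M 1 0 = M 0 1 := by
    have := congrFun (congrFun hsym 0) 1
    simpa [Matrix.transpose_apply] using this
  have qa := h1.dotProduct_mulVec_nonneg ![1, 0]
  have qc := h1.dotProduct_mulVec_nonneg ![0, 1]
  have pa := h2.dotProduct_mulVec_nonneg ![1, 0]
  have pc := h2.dotProduct_mulVec_nonneg ![0, 1]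
  have pp := h2.dotProduct_mulVec_nonneg ![1, 1]
  have pm := h2.dotProduct_mulVec_nonneg ![1, -1]
  simp only [dotProduct, Matrix.mulVec, Fin.sum_univ_two, Matrix.sub_apply, Matrix.smul_apply,
    Matrix.one_apply, star_trivial, Matrix.cons_val_zero, Matrix.cons_val_one, Matrix.head_cons,
    smul_eq_mul, if_true, if_false, eq_self_iff_true, Fin.one_eq_zero_iff, Fin.zero_eq_one_iff,
    Ne, not_false_iff, mul_one, mul_zero, mul_neg, zero_ne_one, one_ne_zero, if_neg,
    reduceCtorEq, OfNat.ofNat_ne_zero, OfNat.ofNat_ne_one] at qa qc pa pc pp pm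
  norm_num at qa qc pa pc pp pm
  fin_cases c <;> fin_cases d <;> simp only [Fin.zero_eta, Fin.mk_one] <;> rw [abs_le] <;>
    constructor <;> linarith

lemma key_ineq (ε cK a b M M' N K : ℝ) (hε : 0 < ε) (ha : |a| ≤ K) (hb : |b| ≤ K)
    (hc : 16 * ε * cK = 8 * K ^ 2) :
    (a * M - b * M') * N ≤ ε * (M ^ 2 + M' ^ 2) + cK * N ^ 2 := by
  have hK : 0 ≤ K := le_trans (abs_nonneg a) ha
  have step1 : (a * M - b * M') * N ≤ K * (|M| + |M'|) * |N| := by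
    calc (a * M - b * M') * N ≤ |(a * M - b * M') * N| := le_abs_self _
      _ = |a * M - b * M'| * |N| := abs_mul _ _
      _ ≤ (|a * M| + |b * M'|) * |N| :=
          mul_le_mul_of_nonneg_right (abs_sub _ _) (abs_nonneg _)
      _ = (|a| * |M| + |b| * |M'|) * |N| := by rw [abs_mul, abs_mul]
      _ ≤ K * (|M| + |M'|) * |N| := by
          apply mul_le_mul_of_nonneg_right _ (abs_nonneg _)
          nlinarith [abs_nonneg M, abs_nonneg M', mul_le_mul_of_nonneg_right ha (abs_nonneg M),
            mul_le_mul_of_nonneg_right hb (abs_nonneg M')]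
  nlinarith [step1, sq_nonneg (4 * ε * |M| - 2 * K * |N|), sq_nonneg (4 * ε * |M'| - 2 * K * |N|),
    sq_abs M, sq_abs M', sq_abs N, hε, mul_pos hε hε]


/-- The per-tuple integration-by-parts identity. -/
lemma tuple_identity {P w u : (Fin 4 → ℝ) → ℝ} (hP : ContDiff ℝ 1 P)
    (hw : ContDiff ℝ 1 w) (hw_tan : ∀ k : Fin 2, ∀ x, pd (dir k) w x = 0)
    (hu : ContDiff ℝ 3 u) (hucs : HasCompactSupport u) (c d e r : Fin 2) :
    ∫ x, P x * pd (dir c) (pd (dir e) u) x * pd (dir d) (pd (dir r) u) x * w x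
      = (∫ x, P x * pd (dir c) (pd (dir d) u) x * pd (dir r) (pd (dir e) u) x * w x)
        + ∫ x, (pd (dir c) P x * pd (dir r) (pd (dir e) u) x
            - pd (dir r) P x * pd (dir c) (pd (dir e) u) x) * pd (dir d) u x * w x := by
  have hu2 : ContDiff ℝ 2 u := hu.of_le (by norm_num)
  have hu3 : ContDiff ℝ ((2 : ℕ) + 1) u := by exact_mod_cast hu
  have hU2 : ∀ k : Fin 4, ContDiff ℝ ((1 : ℕ) + 1) (pd k u) := fun k => contDiff_pd hu3 k
  have hU2' : ∀ k : Fin 4, ContDiff ℝ 2 (pd k u) := fun k => by exact_mod_cast hU2 k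
  have hU1 : ∀ k, ContDiff ℝ 1 (pd k u) := fun k => (hU2' k).of_le one_le_two
  have hD1 : ∀ k k' : Fin 4, ContDiff ℝ 1 (pd k (pd k' u)) := fun k k' => by
    exact_mod_cast contDiff_pd (hU2 k') k
  have hUcs : ∀ k, HasCompactSupport (pd k u) := fun k => hasCompactSupport_pd hucs k
  have hDcs : ∀ k k', HasCompactSupport (pd k (pd k' u)) := fun k k' =>
    hasCompactSupport_pd (hUcs k') k
  have hPd : Differentiable ℝ P := hP.differentiable (by norm_num)
  have hDd : ∀ k k' : Fin 4, Differentiable ℝ (pd k (pd k' u)) := fun k k' =>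
    (hD1 k k').differentiable (by norm_num)
  have hUd : ∀ k, Differentiable ℝ (pd k u) := fun k => (hU1 k).differentiable (by norm_num)
  -- Step 1 : first integration by parts (in direction `dir r`)
  have step1 : ∫ x, P x * pd (dir c) (pd (dir e) u) x * pd (dir d) (pd (dir r) u) x * w x
      = - ∫ x, pd (dir r) (fun y => P y * pd (dir c) (pd (dir e) u) y) x * pd (dir d) u x * w x := by
    calc ∫ x, P x * pd (dir c) (pd (dir e) u) x * pd (dir d) (pd (dir r) u) x * w x
        = ∫ x, P x * pd (dir c) (pd (dir e) u) x * pd (dir r) (pd (dir d) u) x * w x :=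
          intg_congr fun x => by rw [pd_comm hu2 (dir d) (dir r) x]
      _ = - ∫ x, pd (dir r) (fun y => P y * pd (dir c) (pd (dir e) u) y) x * pd (dir d) u x * w x :=
          ibp_w (hP.mul (hD1 (dir c) (dir e))) (hU1 (dir d)) (hUcs (dir d)) hw (hw_tan r)
  -- expand the derivative of the product (and commute third derivatives)
  have step2 : ∀ x, pd (dir r) (fun y => P y * pd (dir c) (pd (dir e) u) y) x * pd (dir d) u x * w x
      = pd (dir r) P x * pd (dir c) (pd (dir e) u) x * pd (dir d) u x * w x
        + P x * pd (dir c) (pd (dir r) (pd (dir e) u)) x * pd (dir d) u x * w x := by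
    intro x
    rw [pd_mul (dir r) (hPd x) (hDd (dir c) (dir e) x), pd_comm (hU2' (dir e)) (dir r) (dir c) x]
    ring
  have int1 : Integrable
      (fun x => pd (dir r) P x * pd (dir c) (pd (dir e) u) x * pd (dir d) u x * w x) := by
    apply Continuous.integrable_of_hasCompactSupport
    · exact (((continuous_pd hP _).mul ((hD1 _ _).continuous)).mul
        ((hU1 _).continuous)).mul hw.continuous
    · exact ((hUcs (dir d)).mul_left).mul_right
  have int2 : Integrable
      (fun x => P x * pd (dir c) (pd (dir r) (pd (dir e) u)) x * pd (dir d) u x * w x) := by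
    apply Continuous.integrable_of_hasCompactSupport
    · exact ((hP.continuous.mul (continuous_pd (hD1 _ _) _)).mul
        ((hU1 _).continuous)).mul hw.continuous
    · exact ((hUcs (dir d)).mul_left).mul_right
  have split1 : (∫ x, pd (dir r) (fun y => P y * pd (dir c) (pd (dir e) u) y) x
        * pd (dir d) u x * w x)
      = (∫ x, pd (dir r) P x * pd (dir c) (pd (dir e) u) x * pd (dir d) u x * w x)
        + ∫ x, P x * pd (dir c) (pd (dir r) (pd (dir e) u)) x * pd (dir d) u x * w x := by
    rw [intg_congr step2, integral_add int1 int2]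
  -- Step 4 : second integration by parts (in direction `dir c`)
  have step4 : ∫ x, P x * pd (dir c) (pd (dir r) (pd (dir e) u)) x * pd (dir d) u x * w x
      = - ∫ x, pd (dir c) (fun y => P y * pd (dir d) u y) x * pd (dir r) (pd (dir e) u) x * w x := by
    calc ∫ x, P x * pd (dir c) (pd (dir r) (pd (dir e) u)) x * pd (dir d) u x * w x
        = ∫ x, P x * pd (dir d) u x * pd (dir c) (pd (dir r) (pd (dir e) u)) x * w x :=
          intg_congr fun x => by ring
      _ = - ∫ x, pd (dir c) (fun y => P y * pd (dir d) u y) x * pd (dir r) (pd (dir e) u) x * w x :=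
          ibp_w (hP.mul (hU1 (dir d))) (hD1 (dir r) (dir e)) (hDcs _ _) hw (hw_tan c)
  have step5 : ∀ x, pd (dir c) (fun y => P y * pd (dir d) u y) x
        * pd (dir r) (pd (dir e) u) x * w x
      = pd (dir c) P x * pd (dir d) u x * pd (dir r) (pd (dir e) u) x * w x
        + P x * pd (dir c) (pd (dir d) u) x * pd (dir r) (pd (dir e) u) x * w x := by
    intro x; rw [pd_mul (dir c) (hPd x) (hUd (dir d) x)]; ring
  have int3 : Integrable
      (fun x => pd (dir c) P x * pd (dir d) u x * pd (dir r) (pd (dir e) u) x * w x) := by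
    apply Continuous.integrable_of_hasCompactSupport
    · exact (((continuous_pd hP _).mul ((hU1 _).continuous)).mul
        ((hD1 _ _).continuous)).mul hw.continuous
    · exact ((hDcs (dir r) (dir e)).mul_left).mul_right
  have int4 : Integrable
      (fun x => P x * pd (dir c) (pd (dir d) u) x * pd (dir r) (pd (dir e) u) x * w x) := by
    apply Continuous.integrable_of_hasCompactSupport
    · exact ((hP.continuous.mul ((hD1 _ _).continuous)).mul
        ((hD1 _ _).continuous)).mul hw.continuous
    · exact ((hDcs (dir r) (dir e)).mul_left).mul_right
  have split2 : (∫ x, pd (dir c) (fun y => P y * pd (dir d) u y) x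
        * pd (dir r) (pd (dir e) u) x * w x)
      = (∫ x, pd (dir c) P x * pd (dir d) u x * pd (dir r) (pd (dir e) u) x * w x)
        + ∫ x, P x * pd (dir c) (pd (dir d) u) x * pd (dir r) (pd (dir e) u) x * w x := by
    rw [intg_congr step5, integral_add int3 int4]
  -- error term
  have int1' : Integrable
      (fun x => pd (dir c) P x * pd (dir r) (pd (dir e) u) x * pd (dir d) u x * w x) := by
    apply Continuous.integrable_of_hasCompactSupport
    · exact (((continuous_pd hP _).mul ((hD1 _ _).continuous)).mul
        ((hU1 _).continuous)).mul hw.continuous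
    · exact ((hUcs (dir d)).mul_left).mul_right
  have errsplit : (∫ x, (pd (dir c) P x * pd (dir r) (pd (dir e) u) x
          - pd (dir r) P x * pd (dir c) (pd (dir e) u) x) * pd (dir d) u x * w x)
      = (∫ x, pd (dir c) P x * pd (dir d) u x * pd (dir r) (pd (dir e) u) x * w x)
        - ∫ x, pd (dir r) P x * pd (dir c) (pd (dir e) u) x * pd (dir d) u x * w x := by
    have eq1 : ∀ x, (pd (dir c) P x * pd (dir r) (pd (dir e) u) x
          - pd (dir r) P x * pd (dir c) (pd (dir e) u) x) * pd (dir d) u x * w x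
        = pd (dir c) P x * pd (dir d) u x * pd (dir r) (pd (dir e) u) x * w x
          - pd (dir r) P x * pd (dir c) (pd (dir e) u) x * pd (dir d) u x * w x := by
      intro x; ring
    rw [intg_congr eq1, integral_sub int3 int1]
  linarith [step1, split1, step4, split2, errsplit]


lemma hcs_sq {f : (Fin 4 → ℝ) → ℝ} (hf : HasCompactSupport f) :
    HasCompactSupport (fun x => f x ^ 2) := by
  simp only [pow_two]
  exact hf.mul_right

lemma sum4_integral (F : Fin 2 → Fin 2 → Fin 2 → Fin 2 → (Fin 4 → ℝ) → ℝ)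
    (hF : ∀ c d e r, Integrable (F c d e r)) :
    ∫ x, ∑ c : Fin 2, ∑ d : Fin 2, ∑ e : Fin 2, ∑ r : Fin 2, F c d e r x
      = ∑ c : Fin 2, ∑ d : Fin 2, ∑ e : Fin 2, ∑ r : Fin 2, ∫ x, F c d e r x := by
  have I1 : ∀ c d e, Integrable (fun x => ∑ r : Fin 2, F c d e r x) := fun c d e =>
    integrable_finset_sum _ fun r _ => hF c d e r
  have I2 : ∀ c d, Integrable (fun x => ∑ e : Fin 2, ∑ r : Fin 2, F c d e r x) := fun c d =>
    integrable_finset_sum _ fun e _ => I1 c d e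
  have I3 : ∀ c, Integrable (fun x => ∑ d : Fin 2, ∑ e : Fin 2, ∑ r : Fin 2, F c d e r x) :=
    fun c => integrable_finset_sum _ fun d _ => I2 c d
  rw [integral_finset_sum _ fun c _ => I3 c]
  refine Finset.sum_congr rfl fun c _ => ?_
  rw [integral_finset_sum _ fun d _ => I2 c d]
  refine Finset.sum_congr rfl fun d _ => ?_
  rw [integral_finset_sum _ fun e _ => I1 c d e]
  refine Finset.sum_congr rfl fun e _ => ?_
  rw [integral_finset_sum _ fun r _ => hF c d e r]

end WEEaux




open WEEaux in
/-- Abstract variable-coefficient form of the paper's weighted elliptic estimate on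
the level sets of the Carleman weight (the passage from (karaman1) to (prfstim2)). -/
theorem weighted_elliptic_estimate (α β A : ℝ) (hα : 0 < α) (hβ : 0 < β) (hA : 0 < A) :
    ∃ C > 0,
      ∀ h : (Fin 4 → ℝ) → Matrix (Fin 2) (Fin 2) ℝ,
        (∀ c d : Fin 2, ContDiff ℝ 1 (fun x => h x c d)) →
        (∀ x, (h x).IsSymm) →
        (∀ x, (h x - α • (1 : Matrix (Fin 2) (Fin 2) ℝ)).PosSemidef) →
        (∀ x, ((β • (1 : Matrix (Fin 2) (Fin 2) ℝ)) - h x).PosSemidef) →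
        (∀ x, ∀ c d : Fin 2,
          |pd 1 (fun y => h y c d) x| ≤ A ∧ |pd 2 (fun y => h y c d) x| ≤ A) →
      ∀ w : (Fin 4 → ℝ) → ℝ, ContDiff ℝ 1 w → (∀ x, 0 ≤ w x) →
        (∀ x, pd 1 w x = 0) → (∀ x, pd 2 w x = 0) →
      ∀ u : (Fin 4 → ℝ) → ℝ, ContDiff ℝ 3 u → HasCompactSupport u →
        ∫ x, (∑ c : Fin 2, ∑ d : Fin 2, ∑ e : Fin 2, ∑ r : Fin 2,
            h x c d * h x e r * pd (dir c) (pd (dir e) u) x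
              * pd (dir d) (pd (dir r) u) x) * w x
          ≤ C * ((∫ x, (∑ c : Fin 2, ∑ d : Fin 2,
                h x c d * pd (dir c) (pd (dir d) u) x)^2 * w x)
             + ∫ x, ((pd 1 u x)^2 + (pd 2 u x)^2) * w x) := by
  classical
  set K : ℝ := 2 * A * β with hKdef
  have hKpos : 0 < K := by positivity
  set ε : ℝ := α ^ 2 / 16 with hεdef
  have hεpos : 0 < ε := by positivity
  set cK : ℝ := 8 * K ^ 2 / α ^ 2 with hcKdef
  have hc_eq : 16 * ε * cK = 8 * K ^ 2 := by
    rw [hεdef, hcKdef]; field_simp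
  have hcKpos : 0 < cK := by rw [hcKdef]; positivity
  refine ⟨2 + 16 * cK, by positivity, ?_⟩
  intro h hh1 hhsym hhα hhβ hhd w hw hw0 hw1 hw2 u hu hucs
  have hw_tan : ∀ k : Fin 2, ∀ x, pd (dir k) w x = 0 := by
    intro k; fin_cases k
    · exact hw1
    · exact hw2
  -- regularity and support
  have hu2 : ContDiff ℝ 2 u := hu.of_le (by norm_num)
  have hu3 : ContDiff ℝ ((2 : ℕ) + 1) u := by exact_mod_cast hu
  have hU2 : ∀ k : Fin 4, ContDiff ℝ ((1 : ℕ) + 1) (pd k u) := fun k => contDiff_pd hu3 k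
  have hU2' : ∀ k : Fin 4, ContDiff ℝ 2 (pd k u) := fun k => by exact_mod_cast hU2 k
  have hU1 : ∀ k, ContDiff ℝ 1 (pd k u) := fun k => (hU2' k).of_le one_le_two
  have hD1 : ∀ k k' : Fin 4, ContDiff ℝ 1 (pd k (pd k' u)) := fun k k' => by
    exact_mod_cast contDiff_pd (hU2 k') k
  have hUcs : ∀ k, HasCompactSupport (pd k u) := fun k => hasCompactSupport_pd hucs k
  have hDcs : ∀ k k', HasCompactSupport (pd k (pd k' u)) := fun k k' =>
    hasCompactSupport_pd (hUcs k') k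
  have hHcont : ∀ c d : Fin 2, Continuous (fun x => h x c d) := fun c d => (hh1 c d).continuous
  -- symmetry facts
  have hhs : ∀ x, h x 1 0 = h x 0 1 := fun x => by
    have := congrFun (congrFun (hhsym x) 0) 1
    simpa [Matrix.transpose_apply] using this
  have hDsym : ∀ x, pd (dir 1) (pd (dir 0) u) x = pd (dir 0) (pd (dir 1) u) x := fun x =>
    pd_comm hu2 _ _ x
  -- entry bounds
  have hHb : ∀ x (c d : Fin 2), |h x c d| ≤ β := fun x c d =>
    entry_bound hα (h x) (hhsym x) (hhα x) (hhβ x) c d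
  have hHd : ∀ x (k c d : Fin 2), |pd (dir k) (fun y => h y c d) x| ≤ A := by
    intro x k c d; fin_cases k
    · exact (hhd x c d).1
    · exact (hhd x c d).2
  have hPb : ∀ (k c d e r : Fin 2) x,
      |pd (dir k) (fun y => h y c d * h y e r) x| ≤ K := by
    intro k c d e r x
    have hm := pd_mul (dir k) (((hh1 c d).differentiable (by norm_num)) x)
      (((hh1 e r).differentiable (by norm_num)) x)
    rw [hm]
    have t1 := abs_add_le (pd (dir k) (fun y => h y c d) x * h x e r)
      (h x c d * pd (dir k) (fun y => h y e r) x)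
    rw [abs_mul, abs_mul] at t1
    have b1 := hHd x k c d
    have b2 := hHd x k e r
    have b3 := hHb x e r
    have b4 := hHb x c d
    have n1 : (0:ℝ) ≤ |pd (dir k) (fun y => h y c d) x| := abs_nonneg _
    have n2 : (0:ℝ) ≤ |h x e r| := abs_nonneg _
    have n3 : (0:ℝ) ≤ |h x c d| := abs_nonneg _
    have n4 : (0:ℝ) ≤ |pd (dir k) (fun y => h y e r) x| := abs_nonneg _
    rw [hKdef]
    nlinarith [mul_le_mul b1 b3 n2 hA.le, mul_le_mul b4 b2 n4 hβ.le]
  -- integrability of the various integrands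
  have intT : ∀ c d e r : Fin 2, Integrable (fun x => h x c d * h x e r
      * pd (dir c) (pd (dir e) u) x * pd (dir d) (pd (dir r) u) x * w x) := by
    intro c d e r
    apply Continuous.integrable_of_hasCompactSupport
    · exact ((((hHcont c d).mul (hHcont e r)).mul ((hD1 _ _).continuous)).mul
        ((hD1 _ _).continuous)).mul hw.continuous
    · exact ((hDcs (dir d) (dir r)).mul_left).mul_right
  have intM : ∀ c d e r : Fin 2, Integrable (fun x => h x c d * h x e r
      * pd (dir c) (pd (dir d) u) x * pd (dir r) (pd (dir e) u) x * w x) := by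
    intro c d e r
    apply Continuous.integrable_of_hasCompactSupport
    · exact ((((hHcont c d).mul (hHcont e r)).mul ((hD1 _ _).continuous)).mul
        ((hD1 _ _).continuous)).mul hw.continuous
    · exact ((hDcs (dir r) (dir e)).mul_left).mul_right
  have intE : ∀ c d e r : Fin 2, Integrable (fun x =>
      (pd (dir c) (fun y => h y c d * h y e r) x * pd (dir r) (pd (dir e) u) x
        - pd (dir r) (fun y => h y c d * h y e r) x * pd (dir c) (pd (dir e) u) x)
      * pd (dir d) u x * w x) := by
    intro c d e r
    apply Continuous.integrable_of_hasCompactSupport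
    · refine ((Continuous.sub ?_ ?_).mul ((hU1 _).continuous)).mul hw.continuous
      · exact (continuous_pd ((hh1 c d).mul (hh1 e r)) _).mul ((hD1 _ _).continuous)
      · exact (continuous_pd ((hh1 c d).mul (hh1 e r)) _).mul ((hD1 _ _).continuous)
    · exact ((hUcs (dir d)).mul_left).mul_right
  have intEfun : Integrable (fun x => ∑ c : Fin 2, ∑ d : Fin 2, ∑ e : Fin 2, ∑ r : Fin 2,
      (pd (dir c) (fun y => h y c d * h y e r) x * pd (dir r) (pd (dir e) u) x
        - pd (dir r) (fun y => h y c d * h y e r) x * pd (dir c) (pd (dir e) u) x)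
      * pd (dir d) u x * w x) :=
    integrable_finset_sum _ fun c _ => integrable_finset_sum _ fun d _ =>
      integrable_finset_sum _ fun e _ => integrable_finset_sum _ fun r _ => intE c d e r
  have intQw : Integrable (fun x => (∑ c : Fin 2, ∑ e : Fin 2,
      pd (dir c) (pd (dir e) u) x * pd (dir c) (pd (dir e) u) x) * w x) := by
    have e1 : (fun x => (∑ c : Fin 2, ∑ e : Fin 2,
        pd (dir c) (pd (dir e) u) x * pd (dir c) (pd (dir e) u) x) * w x)
        = fun x => ∑ c : Fin 2, ∑ e : Fin 2,
            pd (dir c) (pd (dir e) u) x * pd (dir c) (pd (dir e) u) x * w x :=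
      funext fun x => by simp only [Finset.sum_mul]
    rw [e1]
    refine integrable_finset_sum _ fun c _ => integrable_finset_sum _ fun e _ => ?_
    apply Continuous.integrable_of_hasCompactSupport
    · exact (((hD1 _ _).continuous).mul ((hD1 _ _).continuous)).mul hw.continuous
    · exact ((hDcs _ _).mul_left).mul_right
  have intGw : Integrable (fun x => ((pd 1 u x)^2 + (pd 2 u x)^2) * w x) := by
    apply Continuous.integrable_of_hasCompactSupport
    · exact ((((hU1 1).continuous).pow 2).add (((hU1 2).continuous).pow 2)).mul hw.continuous
    · exact ((hcs_sq (hUcs 1)).add (hcs_sq (hUcs 2))).mul_right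
  have intLw : Integrable (fun x => (∑ c : Fin 2, ∑ d : Fin 2, ∑ e : Fin 2, ∑ r : Fin 2,
      h x c d * h x e r * pd (dir c) (pd (dir e) u) x * pd (dir d) (pd (dir r) u) x) * w x) := by
    have e1 : (fun x => (∑ c : Fin 2, ∑ d : Fin 2, ∑ e : Fin 2, ∑ r : Fin 2,
        h x c d * h x e r * pd (dir c) (pd (dir e) u) x * pd (dir d) (pd (dir r) u) x) * w x)
        = fun x => ∑ c : Fin 2, ∑ d : Fin 2, ∑ e : Fin 2, ∑ r : Fin 2,
            h x c d * h x e r * pd (dir c) (pd (dir e) u) x * pd (dir d) (pd (dir r) u) x * w x :=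
      funext fun x => by simp only [Finset.sum_mul]
    rw [e1]
    exact integrable_finset_sum _ fun c _ => integrable_finset_sum _ fun d _ =>
      integrable_finset_sum _ fun e _ => integrable_finset_sum _ fun r _ => intT c d e r
  -- decomposition of the left-hand side
  have LHSeq : (∫ x, (∑ c : Fin 2, ∑ d : Fin 2, ∑ e : Fin 2, ∑ r : Fin 2,
        h x c d * h x e r * pd (dir c) (pd (dir e) u) x * pd (dir d) (pd (dir r) u) x) * w x)
      = ∑ c : Fin 2, ∑ d : Fin 2, ∑ e : Fin 2, ∑ r : Fin 2,
          ∫ x, h x c d * h x e r * pd (dir c) (pd (dir e) u) x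
            * pd (dir d) (pd (dir r) u) x * w x := by
    rw [intg_congr (g := fun x => ∑ c : Fin 2, ∑ d : Fin 2, ∑ e : Fin 2, ∑ r : Fin 2,
      h x c d * h x e r * pd (dir c) (pd (dir e) u) x * pd (dir d) (pd (dir r) u) x * w x)
      (fun x => by simp only [Finset.sum_mul])]
    exact sum4_integral _ intT
  have tuples : ∀ c d e r : Fin 2,
      (∫ x, h x c d * h x e r * pd (dir c) (pd (dir e) u) x * pd (dir d) (pd (dir r) u) x * w x)
      = (∫ x, h x c d * h x e r * pd (dir c) (pd (dir d) u) x * pd (dir r) (pd (dir e) u) x * w x)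
        + ∫ x, (pd (dir c) (fun y => h y c d * h y e r) x * pd (dir r) (pd (dir e) u) x
            - pd (dir r) (fun y => h y c d * h y e r) x * pd (dir c) (pd (dir e) u) x)
            * pd (dir d) u x * w x :=
    fun c d e r => tuple_identity ((hh1 c d).mul (hh1 e r)) hw hw_tan hu hucs c d e r
  have mainEq : (∑ c : Fin 2, ∑ d : Fin 2, ∑ e : Fin 2, ∑ r : Fin 2,
        ∫ x, h x c d * h x e r * pd (dir c) (pd (dir d) u) x * pd (dir r) (pd (dir e) u) x * w x)
      = ∫ x, (∑ c : Fin 2, ∑ d : Fin 2, h x c d * pd (dir c) (pd (dir d) u) x)^2 * w x := by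
    rw [← sum4_integral _ intM]
    refine intg_congr fun x => ?_
    simp only [Fin.sum_univ_two]
    rw [hDsym x, hhs x]
    ring
  have errEq : (∑ c : Fin 2, ∑ d : Fin 2, ∑ e : Fin 2, ∑ r : Fin 2,
        ∫ x, (pd (dir c) (fun y => h y c d * h y e r) x * pd (dir r) (pd (dir e) u) x
            - pd (dir r) (fun y => h y c d * h y e r) x * pd (dir c) (pd (dir e) u) x)
            * pd (dir d) u x * w x)
      = ∫ x, ∑ c : Fin 2, ∑ d : Fin 2, ∑ e : Fin 2, ∑ r : Fin 2,
          (pd (dir c) (fun y => h y c d * h y e r) x * pd (dir r) (pd (dir e) u) x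
            - pd (dir r) (fun y => h y c d * h y e r) x * pd (dir c) (pd (dir e) u) x)
            * pd (dir d) u x * w x :=
    (sum4_integral _ intE).symm
  have identity : (∫ x, (∑ c : Fin 2, ∑ d : Fin 2, ∑ e : Fin 2, ∑ r : Fin 2,
        h x c d * h x e r * pd (dir c) (pd (dir e) u) x * pd (dir d) (pd (dir r) u) x) * w x)
      = (∫ x, (∑ c : Fin 2, ∑ d : Fin 2, h x c d * pd (dir c) (pd (dir d) u) x)^2 * w x)
        + ∫ x, ∑ c : Fin 2, ∑ d : Fin 2, ∑ e : Fin 2, ∑ r : Fin 2,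
            (pd (dir c) (fun y => h y c d * h y e r) x * pd (dir r) (pd (dir e) u) x
              - pd (dir r) (fun y => h y c d * h y e r) x * pd (dir c) (pd (dir e) u) x)
            * pd (dir d) u x * w x := by
    rw [LHSeq]
    calc (∑ c : Fin 2, ∑ d : Fin 2, ∑ e : Fin 2, ∑ r : Fin 2,
          ∫ x, h x c d * h x e r * pd (dir c) (pd (dir e) u) x
            * pd (dir d) (pd (dir r) u) x * w x)
        = ∑ c : Fin 2, ∑ d : Fin 2, ∑ e : Fin 2, ∑ r : Fin 2,
            ((∫ x, h x c d * h x e r * pd (dir c) (pd (dir d) u) x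
              * pd (dir r) (pd (dir e) u) x * w x)
            + ∫ x, (pd (dir c) (fun y => h y c d * h y e r) x * pd (dir r) (pd (dir e) u) x
                - pd (dir r) (fun y => h y c d * h y e r) x * pd (dir c) (pd (dir e) u) x)
                * pd (dir d) u x * w x) :=
          Finset.sum_congr rfl fun c _ => Finset.sum_congr rfl fun d _ =>
            Finset.sum_congr rfl fun e _ => Finset.sum_congr rfl fun r _ => tuples c d e r
      _ = (∑ c : Fin 2, ∑ d : Fin 2, ∑ e : Fin 2, ∑ r : Fin 2,
            ∫ x, h x c d * h x e r * pd (dir c) (pd (dir d) u) x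
              * pd (dir r) (pd (dir e) u) x * w x)
          + ∑ c : Fin 2, ∑ d : Fin 2, ∑ e : Fin 2, ∑ r : Fin 2,
              ∫ x, (pd (dir c) (fun y => h y c d * h y e r) x * pd (dir r) (pd (dir e) u) x
                - pd (dir r) (fun y => h y c d * h y e r) x * pd (dir c) (pd (dir e) u) x)
                * pd (dir d) u x * w x := by
          simp only [Finset.sum_add_distrib]
      _ = _ := by rw [mainEq, errEq]
  -- pointwise bound on the error integrand
  have errBound : ∀ x, (∑ c : Fin 2, ∑ d : Fin 2, ∑ e : Fin 2, ∑ r : Fin 2,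
      (pd (dir c) (fun y => h y c d * h y e r) x * pd (dir r) (pd (dir e) u) x
        - pd (dir r) (fun y => h y c d * h y e r) x * pd (dir c) (pd (dir e) u) x)
      * pd (dir d) u x * w x)
      ≤ (α^2/2 * (∑ c : Fin 2, ∑ e : Fin 2,
          pd (dir c) (pd (dir e) u) x * pd (dir c) (pd (dir e) u) x)
        + 8 * cK * ((pd 1 u x)^2 + (pd 2 u x)^2)) * w x := by
    intro x
    have e1 : (∑ c : Fin 2, ∑ d : Fin 2, ∑ e : Fin 2, ∑ r : Fin 2,
        (pd (dir c) (fun y => h y c d * h y e r) x * pd (dir r) (pd (dir e) u) x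
          - pd (dir r) (fun y => h y c d * h y e r) x * pd (dir c) (pd (dir e) u) x)
        * pd (dir d) u x * w x)
        = (∑ c : Fin 2, ∑ d : Fin 2, ∑ e : Fin 2, ∑ r : Fin 2,
          (pd (dir c) (fun y => h y c d * h y e r) x * pd (dir r) (pd (dir e) u) x
            - pd (dir r) (fun y => h y c d * h y e r) x * pd (dir c) (pd (dir e) u) x)
          * pd (dir d) u x) * w x := by
      simp only [Finset.sum_mul]
    rw [e1]
    refine mul_le_mul_of_nonneg_right ?_ (hw0 x)
    have hsum : (∑ c : Fin 2, ∑ d : Fin 2, ∑ e : Fin 2, ∑ r : Fin 2,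
        (pd (dir c) (fun y => h y c d * h y e r) x * pd (dir r) (pd (dir e) u) x
          - pd (dir r) (fun y => h y c d * h y e r) x * pd (dir c) (pd (dir e) u) x)
        * pd (dir d) u x)
        ≤ ∑ c : Fin 2, ∑ d : Fin 2, ∑ e : Fin 2, ∑ r : Fin 2,
            (ε * ((pd (dir r) (pd (dir e) u) x)^2 + (pd (dir c) (pd (dir e) u) x)^2)
              + cK * (pd (dir d) u x)^2) := by
      refine Finset.sum_le_sum fun c _ => Finset.sum_le_sum fun d _ =>
        Finset.sum_le_sum fun e _ => Finset.sum_le_sum fun r _ => ?_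
      exact key_ineq ε cK _ _ _ _ _ K hεpos (hPb c c d e r x) (hPb r c d e r x) hc_eq
    refine le_trans hsum (le_of_eq ?_)
    simp only [Fin.sum_univ_two]
    simp only [show dir 0 = (1 : Fin 4) from rfl, show dir 1 = (2 : Fin 4) from rfl]
    rw [hεdef]
    ring
  -- pointwise coercivity
  have coerPt : ∀ x, α^2 * (∑ c : Fin 2, ∑ e : Fin 2,
      pd (dir c) (pd (dir e) u) x * pd (dir c) (pd (dir e) u) x)
      ≤ ∑ c : Fin 2, ∑ d : Fin 2, ∑ e : Fin 2, ∑ r : Fin 2,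
          h x c d * h x e r * pd (dir c) (pd (dir e) u) x * pd (dir d) (pd (dir r) u) x := by
    intro x
    have hDmsym : (Matrix.of fun c e => pd (dir c) (pd (dir e) u) x).IsSymm := by
      rw [Matrix.IsSymm]
      ext i j
      simp only [Matrix.transpose_apply, Matrix.of_apply]
      exact pd_comm hu2 _ _ x
    have hc := coer_mat hα.le (h x) _ (hhα x) hDmsym
    have e1 : ((Matrix.of fun c e => pd (dir c) (pd (dir e) u) x) *
        (Matrix.of fun c e => pd (dir c) (pd (dir e) u) x)).trace
        = ∑ c : Fin 2, ∑ e : Fin 2,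
            pd (dir c) (pd (dir e) u) x * pd (dir c) (pd (dir e) u) x := by
      simp only [Matrix.trace, Matrix.diag, Matrix.mul_apply, Fin.sum_univ_two, Matrix.of_apply]
      rw [hDsym x]
    have e2 : (h x * (Matrix.of fun c e => pd (dir c) (pd (dir e) u) x) *
        (h x * Matrix.of fun c e => pd (dir c) (pd (dir e) u) x)).trace
        = ∑ c : Fin 2, ∑ d : Fin 2, ∑ e : Fin 2, ∑ r : Fin 2,
            h x c d * h x e r * pd (dir c) (pd (dir e) u) x * pd (dir d) (pd (dir r) u) x := by
      simp only [Matrix.trace, Matrix.diag, Matrix.mul_apply, Fin.sum_univ_two, Matrix.of_apply]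
      rw [hDsym x, hhs x]; ring
    rw [e1, e2] at hc
    exact hc
  -- integral-level coercivity
  have mono1 : α^2 * (∫ x, (∑ c : Fin 2, ∑ e : Fin 2,
        pd (dir c) (pd (dir e) u) x * pd (dir c) (pd (dir e) u) x) * w x)
      ≤ ∫ x, (∑ c : Fin 2, ∑ d : Fin 2, ∑ e : Fin 2, ∑ r : Fin 2,
          h x c d * h x e r * pd (dir c) (pd (dir e) u) x * pd (dir d) (pd (dir r) u) x) * w x := by
    rw [← integral_const_mul]
    refine integral_mono (intQw.const_mul _) intLw fun x => ?_
    have t := mul_le_mul_of_nonneg_right (coerPt x) (hw0 x)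
    calc α^2 * ((∑ c : Fin 2, ∑ e : Fin 2,
          pd (dir c) (pd (dir e) u) x * pd (dir c) (pd (dir e) u) x) * w x)
        = (α^2 * (∑ c : Fin 2, ∑ e : Fin 2,
            pd (dir c) (pd (dir e) u) x * pd (dir c) (pd (dir e) u) x)) * w x := by ring
      _ ≤ _ := t
  -- integral-level error bound
  have mono2 : (∫ x, ∑ c : Fin 2, ∑ d : Fin 2, ∑ e : Fin 2, ∑ r : Fin 2,
        (pd (dir c) (fun y => h y c d * h y e r) x * pd (dir r) (pd (dir e) u) x
          - pd (dir r) (fun y => h y c d * h y e r) x * pd (dir c) (pd (dir e) u) x)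
        * pd (dir d) u x * w x)
      ≤ α^2/2 * (∫ x, (∑ c : Fin 2, ∑ e : Fin 2,
          pd (dir c) (pd (dir e) u) x * pd (dir c) (pd (dir e) u) x) * w x)
        + 8 * cK * ∫ x, ((pd 1 u x)^2 + (pd 2 u x)^2) * w x := by
    have intRHS : Integrable (fun x => α^2/2 * ((∑ c : Fin 2, ∑ e : Fin 2,
        pd (dir c) (pd (dir e) u) x * pd (dir c) (pd (dir e) u) x) * w x)
        + 8 * cK * (((pd 1 u x)^2 + (pd 2 u x)^2) * w x)) :=
      (intQw.const_mul _).add (intGw.const_mul _)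
    have step : (∫ x, ∑ c : Fin 2, ∑ d : Fin 2, ∑ e : Fin 2, ∑ r : Fin 2,
        (pd (dir c) (fun y => h y c d * h y e r) x * pd (dir r) (pd (dir e) u) x
          - pd (dir r) (fun y => h y c d * h y e r) x * pd (dir c) (pd (dir e) u) x)
        * pd (dir d) u x * w x)
        ≤ ∫ x, (α^2/2 * ((∑ c : Fin 2, ∑ e : Fin 2,
            pd (dir c) (pd (dir e) u) x * pd (dir c) (pd (dir e) u) x) * w x)
          + 8 * cK * (((pd 1 u x)^2 + (pd 2 u x)^2) * w x)) := by
      refine integral_mono intEfun intRHS fun x => ?_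
      refine le_trans (errBound x) (le_of_eq ?_)
      ring
    rw [integral_add (intQw.const_mul _) (intGw.const_mul _), integral_const_mul,
      integral_const_mul] at step
    exact step
  -- positivity of the two right-hand integrals
  have ISnn : 0 ≤ ∫ x, (∑ c : Fin 2, ∑ d : Fin 2,
      h x c d * pd (dir c) (pd (dir d) u) x)^2 * w x :=
    integral_nonneg fun x => mul_nonneg (sq_nonneg _) (hw0 x)
  have IGnn : 0 ≤ ∫ x, ((pd 1 u x)^2 + (pd 2 u x)^2) * w x :=
    integral_nonneg fun x => mul_nonneg (by positivity) (hw0 x)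
  nlinarith [identity, mono1, mono2, ISnn, IGnn, hcKpos, mul_nonneg hcKpos.le ISnn,
    mul_nonneg hcKpos.le IGnn]
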